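/- Let A be a finite-dimensional commutative Frobenius algebra over K with Euler element e and counit ε. Define Ω_{g,n}(v₁,...,vₙ) = ε(v₁⋯vₙ e^g). Then the splitting relation Ω_{g₁+g₂, n₁+n₂}(u₁,...,u_{n₁}, w₁,...,w_{n₂}) = Σ_{a,b} Ω_{g₁, n₁+1}(u₁,...,u_{n₁}, e_a) Ω_{g₂, n₂+1}(w₁,...,w_{n₂}, e_b) η^{ab} holds. -/

import Mathlib

/-- With `Ω_{g,n}(v₁,…,vₙ) = ε(v₁⋯vₙ 𝐞^g)`, the splitting relation
`Ω_{g₁+g₂,n₁+n₂}(u,w) = Σ_{a,b} Ω_{g₁,n₁+1}(u,e_a) Ω_{g₂,n₂+1}(w,e_b) η^{ab}` holds. -/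
theorem tqft_splitting_relation
    {K A : Type*} [Field K] [CommRing A] [Algebra K A] [FiniteDimensional K A]
    (η : A →ₗ[K] A →ₗ[K] K)
    (hsym : ∀ u v : A, η u v = η v u)
    (hfrob : ∀ u v w : A, η u (v * w) = η (u * v) w)
    {r : ℕ} (e : Module.Basis (Fin r) K A) (ηinv : Fin r → Fin r → K)
    (hinv : ∀ i k : Fin r, ∑ j, η (e i) (e j) * ηinv j k = if i = k then (1 : K) else 0)
    (E : A) (hE : E = ∑ a, ∑ b, ηinv a b • (e a * e b))
    (g₁ g₂ n₁ n₂ : ℕ) (u : Fin n₁ → A) (w : Fin n₂ → A) :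
    η 1 ((∏ i, u i) * (∏ j, w j) * E ^ (g₁ + g₂))
      = ∑ a, ∑ b,
          η 1 ((∏ i, u i) * e a * E ^ g₁) * η 1 ((∏ j, w j) * e b * E ^ g₂) * ηinv a b := by
  set P := ∏ i, u i with hP
  set Q := ∏ j, w j with hQ
  have hfrob1 : ∀ x y : A, η 1 (x * y) = η x y := by
    intro x y; rw [hfrob, one_mul]
  set x := P * E ^ g₁ with hx
  have key : ∑ b, (∑ a, η x (e a) * ηinv a b) • e b = x := by
    conv_rhs => rw [← e.sum_repr x]
    refine Finset.sum_congr rfl fun b _ => ?_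
    congr 1
    calc ∑ a, η x (e a) * ηinv a b
        = ∑ a, (∑ k, e.repr x k * η (e k) (e a)) * ηinv a b := by
          refine Finset.sum_congr rfl fun a _ => ?_
          congr 1
          conv_lhs => rw [← e.sum_repr x]
          simp only [map_sum, LinearMap.sum_apply, map_smul, LinearMap.smul_apply, smul_eq_mul]
      _ = ∑ k, e.repr x k * ∑ a, η (e k) (e a) * ηinv a b := by
          simp only [Finset.sum_mul, mul_assoc]
          rw [Finset.sum_comm]
          simp [Finset.mul_sum]
      _ = e.repr x b := by simp [hinv]
  have h1 : ∀ a, η 1 (P * e a * E ^ g₁) = η x (e a) := by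
    intro a
    have : P * e a * E ^ g₁ = x * e a := by rw [hx]; ring
    rw [this, hfrob1]
  calc η 1 (P * Q * E ^ (g₁ + g₂))
      = η 1 (Q * x * E ^ g₂) := by
        congr 1; rw [hx, pow_add]; ring
    _ = η 1 (Q * (∑ b, (∑ a, η x (e a) * ηinv a b) • e b) * E ^ g₂) := by rw [key]
    _ = ∑ b, (∑ a, η x (e a) * ηinv a b) * η 1 (Q * e b * E ^ g₂) := by
        rw [Finset.mul_sum, Finset.sum_mul, map_sum]
        refine Finset.sum_congr rfl fun b _ => ?_
        rw [mul_smul_comm, smul_mul_assoc, map_smul, smul_eq_mul]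
    _ = ∑ a, ∑ b, η 1 (P * e a * E ^ g₁) * η 1 (Q * e b * E ^ g₂) * ηinv a b := by
        rw [Finset.sum_comm]
        refine Finset.sum_congr rfl fun a _ => ?_
        rw [Finset.sum_mul]
        refine Finset.sum_congr rfl fun b _ => ?_
        rw [h1]; ring
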